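/- Every combinatorial 2-cobordism factors as a cofibration followed by a fibration: given (C, l_m: m → C, l_n: n → C, g), setting B = im(l_n), A = im(l_m) ∪ (C \ im(l_n)), and k = the pullback (intersection) im(l_m) ∩ im(l_n), with genus functions the restrictions of g adjusted so that the fibration has genus zero on its source, the composite of the resulting cofibration m → k and fibration k → n equals the original cobordism. -/

import Mathlib

open scoped Classical

/-- The relation generating the pushout of a span `A ← k → B` of (finite) sets. -/
def PRel {k A B : Type} (f : k → A) (g : k → B) : A ⊕ B → A ⊕ B → Prop :=
  fun x y => ∃ z, x = Sum.inl (f z) ∧ y = Sum.inr (g z)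

/-- The pushout of the span `A ← k → B`. -/
def Pushout {k A B : Type} (f : k → A) (g : k → B) : Type :=
  Quot (PRel f g)

/-- Canonical map `ι_A : A → A ⊔_k B`. -/
def pInl {k A B : Type} (f : k → A) (g : k → B) (a : A) : Pushout f g :=
  Quot.mk _ (Sum.inl a)

/-- Canonical map `ι_B : B → A ⊔_k B`. -/
def pInr {k A B : Type} (f : k → A) (g : k → B) (b : B) : Pushout f g :=
  Quot.mk _ (Sum.inr b)

instance {k A B : Type} (f : k → A) (g : k → B) [Finite A] [Finite B] :
    Finite (Pushout f g) :=
  Quot.finite _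

noncomputable instance {k A B : Type} (f : k → A) (g : k → B) [Fintype A] [Fintype B] :
    Fintype (Pushout f g) :=
  Fintype.ofFinite _

/-- The genus formula of Definition 3.4:
`g(x) = 1 + Σ_{ι_A(a)=x}(g₁(a)−1) + Σ_{ι_B(b)=x}(g₂(b)−1) + #{y ∈ k : y ↦ x}`. -/
noncomputable def compGenus {k A B : Type} [Fintype k] [Fintype A] [Fintype B]
    (f : k → A) (g : k → B) (g1 : A → ℤ) (g2 : B → ℤ) (x : Pushout f g) : ℤ :=
  1 + (∑ a ∈ Finset.univ.filter (fun a => pInl f g a = x), (g1 a - 1))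
    + (∑ b ∈ Finset.univ.filter (fun b => pInr f g b = x), (g2 b - 1))
    + ((Finset.univ.filter (fun y : k => pInl f g (f y) = x)).card : ℤ)

/-- A combinatorial 2-cobordism from the finite set `m` to the finite set `n`. -/
structure Cob (m n : Type) : Type 1 where
  C : Type
  [fin : Fintype C]
  lm : m → C
  ln : n → C
  g : C → ℕ

attribute [instance] Cob.fin

/-- Composition of combinatorial 2-cobordisms via pushout of component sets
and the genus formula of Definition 3.4. -/
noncomputable def Cob.comp {m k n : Type} [Fintype k] (ψ : Cob k n) (φ : Cob m k) :
    Cob m n where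
  C := Pushout φ.ln ψ.lm
  lm := fun x => pInl φ.ln ψ.lm (φ.lm x)
  ln := fun y => pInr φ.ln ψ.lm (ψ.ln y)
  g := fun x =>
    (compGenus φ.ln ψ.lm (fun a => (φ.g a : ℤ)) (fun b => (ψ.g b : ℤ)) x).toNat

/-- Equivalence of combinatorial 2-cobordisms: a bijection of component sets
intertwining the structure maps and the genus functions. -/
def Cob.Equiv {m n : Type} (φ φ' : Cob m n) : Prop :=
  ∃ χ : φ.C ≃ φ'.C,
    (∀ x, χ (φ.lm x) = φ'.lm x) ∧ (∀ y, χ (φ.ln y) = φ'.ln y) ∧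
    (∀ c, φ'.g (χ c) = φ.g c)

/-- A cofibration: `l_n` is injective and `l_n` lifts through `l_m`. -/
def Cob.IsCofib {m n : Type} (φ : Cob m n) : Prop :=
  Function.Injective φ.ln ∧ ∃ u : n → m, ∀ y, φ.lm (u y) = φ.ln y

/-- A fibration: `l_m` is injective, `l_n` is surjective, and `g ∘ l_m = 0`. -/
def Cob.IsFib {m n : Type} (φ : Cob m n) : Prop :=
  Function.Injective φ.lm ∧ Function.Surjective φ.ln ∧ ∀ x, φ.g (φ.lm x) = 0

/-- The five local conditions of Definition 5.2.1 defining an oriented 1-cobordism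
between signed finite sets (signs recorded by Boolean functions, `true` = `+`). -/
def IsOriented {m n C : Type} (sm : m → Bool) (sn : n → Bool)
    (lm : m → C) (ln : n → C) : Prop :=
  ∀ c : C,
    (∃ a b : m, sm a = true ∧ sm b = false ∧ a ≠ b ∧
      (∀ x, lm x = c ↔ (x = a ∨ x = b)) ∧ (∀ y, ln y ≠ c)) ∨
    (∃ a b : n, sn a = true ∧ sn b = false ∧ a ≠ b ∧
      (∀ y, ln y = c ↔ (y = a ∨ y = b)) ∧ (∀ x, lm x ≠ c)) ∨
    (∃ a : m, ∃ b : n, sm a = sn b ∧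
      (∀ x, lm x = c ↔ x = a) ∧ (∀ y, ln y = c ↔ y = b)) ∨
    ((∀ x, lm x ≠ c) ∧ (∀ y, ln y ≠ c))

namespace Stmt6

variable {m n : Type} (φ : Cob m n)

/-- The cofibration part. -/
noncomputable def eCob : Cob m {c : φ.C // (∃ x, φ.lm x = c) ∧ ∃ y, φ.ln y = c} where
  C := {c : φ.C // (∃ x, φ.lm x = c) ∨ ∀ y, φ.ln y ≠ c}
  fin := Fintype.ofFinite _
  lm := fun x => ⟨φ.lm x, Or.inl ⟨x, rfl⟩⟩
  ln := fun z => ⟨z.1, Or.inl z.2.1⟩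
  g := fun a => φ.g a.1

/-- The fibration part. -/
noncomputable def fCob : Cob {c : φ.C // (∃ x, φ.lm x = c) ∧ ∃ y, φ.ln y = c} n where
  C := {c : φ.C // ∃ y, φ.ln y = c}
  fin := Fintype.ofFinite _
  lm := fun z => ⟨z.1, z.2.2⟩
  ln := fun y => ⟨φ.ln y, y, rfl⟩
  g := fun b => if ∃ x, φ.lm x = b.1 then 0 else φ.g b.1

/-- Comparison map from the pushout back to the original component set. -/
noncomputable def qmap : Pushout (eCob φ).ln (fCob φ).lm → φ.C :=
  Quot.lift (Sum.elim (fun a => a.1) (fun b => b.1)) (by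
    rintro _ _ ⟨z, rfl, rfl⟩; rfl)

lemma merge (a : (eCob φ).C) (b : (fCob φ).C) (h : a.1 = b.1) :
    pInl (eCob φ).ln (fCob φ).lm a = pInr (eCob φ).ln (fCob φ).lm b := by
  have hx : ∃ x, φ.lm x = a.1 := by
    rcases a.2 with h' | h'
    · exact h'
    · obtain ⟨y, hy⟩ := b.2
      exact absurd (hy.trans h.symm) (h' y)
  refine Quot.sound ⟨⟨a.1, hx, h ▸ b.2⟩, ?_, ?_⟩
  · exact congrArg Sum.inl (Subtype.ext rfl)
  · exact congrArg Sum.inr (Subtype.ext h.symm)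

lemma inl_eq_iff (a : (eCob φ).C) (c : Pushout (eCob φ).ln (fCob φ).lm) :
    pInl (eCob φ).ln (fCob φ).lm a = c ↔ a.1 = qmap φ c := by
  constructor
  · rintro rfl; rfl
  · intro h
    obtain ⟨s, rfl⟩ := Quot.exists_rep c
    cases s with
    | inl a' => exact congrArg (Quot.mk _) (congrArg Sum.inl (Subtype.ext h))
    | inr b' => exact merge φ a b' h

lemma inr_eq_iff (b : (fCob φ).C) (c : Pushout (eCob φ).ln (fCob φ).lm) :
    pInr (eCob φ).ln (fCob φ).lm b = c ↔ b.1 = qmap φ c := by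
  constructor
  · rintro rfl; rfl
  · intro h
    obtain ⟨s, rfl⟩ := Quot.exists_rep c
    cases s with
    | inl a' => exact (merge φ a' b h.symm).symm
    | inr b' => exact congrArg (Quot.mk _) (congrArg Sum.inr (Subtype.ext h))

lemma qmap_bij : Function.Bijective (qmap φ) := by
  constructor
  · intro c c' h
    obtain ⟨s, rfl⟩ := Quot.exists_rep c
    obtain ⟨t, rfl⟩ := Quot.exists_rep c'
    cases s with
    | inl a =>
      cases t with
      | inl a' => exact congrArg (Quot.mk _) (congrArg Sum.inl (Subtype.ext h))
      | inr b' => exact merge φ a b' h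
    | inr b =>
      cases t with
      | inl a' => exact (merge φ a' b h.symm).symm
      | inr b' => exact congrArg (Quot.mk _) (congrArg Sum.inr (Subtype.ext h))
  · intro c0
    by_cases hB : ∃ y, φ.ln y = c0
    · exact ⟨pInr _ _ ⟨c0, hB⟩, rfl⟩
    · exact ⟨pInl _ _ ⟨c0, Or.inr fun y hy => hB ⟨y, hy⟩⟩, rfl⟩

lemma genus_eq (c : Pushout (eCob φ).ln (fCob φ).lm) :
    φ.g (qmap φ c) = (Cob.comp (fCob φ) (eCob φ)).g c := by
  have hAiff := fun a => inl_eq_iff φ a c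
  have hBiff := fun b => inr_eq_iff φ b c
  show _ = (compGenus (eCob φ).ln (fCob φ).lm
      (fun a => ((eCob φ).g a : ℤ)) (fun b => ((fCob φ).g b : ℤ)) c).toNat
  rw [compGenus]
  set c0 := qmap φ c with hc0
  by_cases hB : ∃ y, φ.ln y = c0
  · by_cases hx : ∃ x, φ.lm x = c0
    · have hA : (∃ x, φ.lm x = c0) ∨ ∀ y, φ.ln y ≠ c0 := Or.inl hx
      have e1 : Finset.univ.filter
          (fun a : (eCob φ).C => pInl (eCob φ).ln (fCob φ).lm a = c) =
          ({⟨c0, hA⟩} : Finset (eCob φ).C) := by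
        ext a
        simp only [Finset.mem_filter, Finset.mem_univ, true_and, Finset.mem_singleton, hAiff]
        exact ⟨fun h => Finset.mem_singleton.mpr (Subtype.ext h), fun h => congrArg Subtype.val (Finset.mem_singleton.mp h)⟩
      have e2 : Finset.univ.filter
          (fun b : (fCob φ).C => pInr (eCob φ).ln (fCob φ).lm b = c) =
          ({⟨c0, hB⟩} : Finset (fCob φ).C) := by
        ext b
        simp only [Finset.mem_filter, Finset.mem_univ, true_and, Finset.mem_singleton, hBiff]
        exact ⟨fun h => Finset.mem_singleton.mpr (Subtype.ext h), fun h => congrArg Subtype.val (Finset.mem_singleton.mp h)⟩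
      have e3 : Finset.univ.filter
          (fun z : {c : φ.C // (∃ x, φ.lm x = c) ∧ ∃ y, φ.ln y = c} =>
            pInl (eCob φ).ln (fCob φ).lm ((eCob φ).ln z) = c) =
          {(⟨c0, hx, hB⟩ : {c : φ.C // (∃ x, φ.lm x = c) ∧ ∃ y, φ.ln y = c})} := by
        ext z
        simp only [Finset.mem_filter, Finset.mem_univ, true_and, Finset.mem_singleton, hAiff]
        exact ⟨fun h => Subtype.ext h, fun h => congrArg Subtype.val h⟩
      rw [e1, e2, e3, Finset.sum_singleton (ι := (eCob φ).C) (a := ⟨c0, hA⟩), Finset.sum_singleton (ι := (fCob φ).C) (a := ⟨c0, hB⟩), Finset.card_singleton]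
      simp only [eCob, fCob, if_pos hx]
      omega
    · have hA : ¬((∃ x, φ.lm x = c0) ∨ ∀ y, φ.ln y ≠ c0) := by
        rintro (h | h)
        · exact hx h
        · obtain ⟨y, hy⟩ := hB; exact h y hy
      have e1 : Finset.univ.filter
          (fun a : (eCob φ).C => pInl (eCob φ).ln (fCob φ).lm a = c) = ∅ := by
        ext a
        simp only [Finset.mem_filter, Finset.mem_univ, true_and, Finset.notMem_empty,
          iff_false, hAiff]
        intro h; exact hA (h ▸ a.2)
      have e2 : Finset.univ.filter
          (fun b : (fCob φ).C => pInr (eCob φ).ln (fCob φ).lm b = c) =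
          ({⟨c0, hB⟩} : Finset (fCob φ).C) := by
        ext b
        simp only [Finset.mem_filter, Finset.mem_univ, true_and, Finset.mem_singleton, hBiff]
        exact ⟨fun h => Finset.mem_singleton.mpr (Subtype.ext h), fun h => congrArg Subtype.val (Finset.mem_singleton.mp h)⟩
      have e3 : Finset.univ.filter
          (fun z : {c : φ.C // (∃ x, φ.lm x = c) ∧ ∃ y, φ.ln y = c} =>
            pInl (eCob φ).ln (fCob φ).lm ((eCob φ).ln z) = c) = ∅ := by
        ext z
        simp only [Finset.mem_filter, Finset.mem_univ, true_and, Finset.notMem_empty,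
          iff_false, hAiff]
        intro h; exact hx (h ▸ z.2.1)
      rw [e1, e2, e3, Finset.sum_empty, Finset.sum_singleton (ι := (fCob φ).C) (a := ⟨c0, hB⟩), Finset.card_empty]
      simp only [eCob, fCob, if_neg hx]
      omega
  · have hA : (∃ x, φ.lm x = c0) ∨ ∀ y, φ.ln y ≠ c0 :=
      Or.inr fun y hy => hB ⟨y, hy⟩
    have e1 : Finset.univ.filter
        (fun a : (eCob φ).C => pInl (eCob φ).ln (fCob φ).lm a = c) =
        ({⟨c0, hA⟩} : Finset (eCob φ).C) := by
      ext a
      simp only [Finset.mem_filter, Finset.mem_univ, true_and, Finset.mem_singleton, hAiff]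
      exact ⟨fun h => Finset.mem_singleton.mpr (Subtype.ext h), fun h => congrArg Subtype.val (Finset.mem_singleton.mp h)⟩
    have e2 : Finset.univ.filter
        (fun b : (fCob φ).C => pInr (eCob φ).ln (fCob φ).lm b = c) = ∅ := by
      ext b
      simp only [Finset.mem_filter, Finset.mem_univ, true_and, Finset.notMem_empty,
        iff_false, hBiff]
      intro h; exact hB (h ▸ b.2)
    have e3 : Finset.univ.filter
        (fun z : {c : φ.C // (∃ x, φ.lm x = c) ∧ ∃ y, φ.ln y = c} =>
          pInl (eCob φ).ln (fCob φ).lm ((eCob φ).ln z) = c) = ∅ := by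
      ext z
      simp only [Finset.mem_filter, Finset.mem_univ, true_and, Finset.notMem_empty,
        iff_false, hAiff]
      intro h; exact hB (h ▸ z.2.2)
    rw [e1, e2, e3, Finset.sum_singleton (ι := (eCob φ).C) (a := ⟨c0, hA⟩), Finset.sum_empty, Finset.card_empty]
    simp only [eCob]
    omega

end Stmt6

/-- Proposition 4.3, existence: every combinatorial 2-cobordism factors
as a cofibration followed by a fibration, with intermediate set `im(l_m) ∩ im(l_n)`,
cofibration component set `im(l_m) ∪ (C \ im(l_n))` and fibration component set `im(l_n)`. -/
theorem stmt_6 {m n : Type} (φ : Cob m n) :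
    ∃ (e : Cob m {c : φ.C // (∃ x, φ.lm x = c) ∧ ∃ y, φ.ln y = c})
      (f : Cob {c : φ.C // (∃ x, φ.lm x = c) ∧ ∃ y, φ.ln y = c} n),
      e.IsCofib ∧ f.IsFib ∧
      Nonempty (e.C ≃ {c : φ.C // (∃ x, φ.lm x = c) ∨ ∀ y, φ.ln y ≠ c}) ∧
      Nonempty (f.C ≃ {c : φ.C // ∃ y, φ.ln y = c}) ∧
      Cob.Equiv (Cob.comp f e) φ := by
  refine ⟨Stmt6.eCob φ, Stmt6.fCob φ, ?_, ?_, ⟨Equiv.refl _⟩, ⟨Equiv.refl _⟩, ?_⟩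
  · refine ⟨fun z z' h => ?_,
      fun z => Classical.choose z.2.1, fun z => Subtype.ext (Classical.choose_spec z.2.1)⟩
    have h' : ((Stmt6.eCob φ).ln z).1 = ((Stmt6.eCob φ).ln z').1 := congrArg Subtype.val h
    exact Subtype.ext h'
  · refine ⟨fun z z' h => ?_,
      fun b => by obtain ⟨c, y, hy⟩ := b; exact ⟨y, Subtype.ext hy⟩,
      fun z => if_pos z.2.1⟩
    have h' : ((Stmt6.fCob φ).lm z).1 = ((Stmt6.fCob φ).lm z').1 := congrArg Subtype.val h
    exact Subtype.ext h'
  · exact ⟨Equiv.ofBijective (Stmt6.qmap φ) (Stmt6.qmap_bij φ),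
      fun x => rfl, fun y => rfl, fun c => Stmt6.genus_eq φ c⟩
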